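/- (Estimator L2-gain bound.) Let Z be a real Hilbert space, X a linear subspace of Z, A : X → Z a linear map, B₁ : ℝ^r → Z a continuous linear map, C₂ : X → ℝ^q and C₃ : X → ℝ^{p₁} linear maps, and D₂ : ℝ^r → ℝ^q, D₃ : ℝ^r → ℝ^{p₁} linear maps. Let P₂ : Z → Z be a continuous linear operator that is self-adjoint and coercive, let 𝒵 : ℝ^q → Z be a continuous linear map, and let L : ℝ^q → Z be a continuous linear map satisfying P₂(Lv) = 𝒵v for all v ∈ ℝ^q. Suppose there exist scalars ε₂ > 0 and γ₂ > 0 such that for all e ∈ X, ω ∈ ℝ^r, and υ ∈ ℝ^{p₁}: 2⟨P₂(Ae) + 𝒵(C₂e), e⟩ − 2⟨P₂(B₁ω) + 𝒵(D₂ω), e⟩ − γ₂‖ω‖² − γ₂‖υ‖² + 2υᵀ(C₃e + D₃ω) ≤ −ε₂‖e‖². Then (i) P₂ is bijective with continuous inverse; and (ii) for any continuous ω : [0,∞) → ℝ^r and any continuously differentiable e : [0,∞) → Z with e(t) ∈ X for all t ≥ 0, e(0) = 0, and de/dt(t) = A(e(t)) + L(C₂(e(t))) − B₁(ω(t)) −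 L(D₂(ω(t))), if z_e(t) = C₃(e(t)) + D₃(ω(t)) is continuous, then for every T ≥ 0, ∫₀ᵀ ‖z_e(t)‖² dt ≤ γ₂² ∫₀ᵀ ‖ω(t)‖² dt. -/

import Mathlib

open RealInnerProductSpace MeasureTheory intervalIntegral

set_option maxHeartbeats 1000000

/-- (Estimator L2-gain bound.) Under the operator inequality of Theorem 3
of the paper, `P₂` is bijective with continuous inverse, and the estimation-error
trajectory driven by the error injection `L = P₂⁻¹𝒵` satisfies the L2-gain bound
`‖z_e‖_{L2} ≤ γ₂ ‖ω‖_{L2}`. -/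
theorem estimator_L2_gain
    {Z : Type*} [NormedAddCommGroup Z] [InnerProductSpace ℝ Z] [CompleteSpace Z]
    (X : Submodule ℝ Z) {r q p₁ : ℕ}
    (A : X →ₗ[ℝ] Z)
    (B₁ : EuclideanSpace ℝ (Fin r) →L[ℝ] Z)
    (C₂ : X →ₗ[ℝ] EuclideanSpace ℝ (Fin q)) (C₃ : X →ₗ[ℝ] EuclideanSpace ℝ (Fin p₁))
    (D₂ : EuclideanSpace ℝ (Fin r) →ₗ[ℝ] EuclideanSpace ℝ (Fin q))
    (D₃ : EuclideanSpace ℝ (Fin r) →ₗ[ℝ] EuclideanSpace ℝ (Fin p₁))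
    (P₂ : Z →L[ℝ] Z)
    (hP₂sa : ∀ x y : Z, ⟪P₂ x, y⟫ = ⟪x, P₂ y⟫)
    (hP₂coer : ∃ ε > 0, ∀ x : Z, ⟪x, P₂ x⟫ ≥ ε * ‖x‖ ^ 2)
    (𝒵 : EuclideanSpace ℝ (Fin q) →L[ℝ] Z) (L : EuclideanSpace ℝ (Fin q) →L[ℝ] Z)
    (hL : ∀ v, P₂ (L v) = 𝒵 v)
    (ε₂ γ₂ : ℝ) (hε₂ : 0 < ε₂) (hγ₂ : 0 < γ₂)
    -- the operator inequality
    (hdiss : ∀ (e : X) (ω : EuclideanSpace ℝ (Fin r)) (υ : EuclideanSpace ℝ (Fin p₁)),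
      2 * ⟪P₂ (A e) + 𝒵 (C₂ e), (e : Z)⟫ - 2 * ⟪P₂ (B₁ ω) + 𝒵 (D₂ ω), (e : Z)⟫
        - γ₂ * ‖ω‖ ^ 2 - γ₂ * ‖υ‖ ^ 2 + 2 * ⟪υ, C₃ e + D₃ ω⟫
      ≤ -ε₂ * ‖(e : Z)‖ ^ 2) :
    -- (i) P₂ is bijective with continuous inverse
    (Function.Bijective P₂ ∧
      ∃ Pinv : Z →L[ℝ] Z, (∀ x, Pinv (P₂ x) = x) ∧ (∀ x, P₂ (Pinv x) = x)) ∧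
    -- (ii) the L2-gain bound for the error dynamics
    (∀ (ω : ℝ → EuclideanSpace ℝ (Fin r)), Continuous ω →
      ∀ (e : ℝ → Z), (∀ t, 0 ≤ t → e t ∈ X) → e 0 = 0 →
      (∀ t, 0 ≤ t → ∀ (hm : e t ∈ X),
        HasDerivAt e (A ⟨e t, hm⟩ + L (C₂ ⟨e t, hm⟩) - B₁ (ω t) - L (D₂ (ω t))) t) →
      ∀ (ze : ℝ → EuclideanSpace ℝ (Fin p₁)),
        (∀ t, 0 ≤ t → ∀ (hm : e t ∈ X), ze t = C₃ ⟨e t, hm⟩ + D₃ (ω t)) →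
        Continuous ze →
        ∀ T, 0 ≤ T →
          (∫ t in (0:ℝ)..T, ‖ze t‖ ^ 2) ≤ γ₂ ^ 2 * ∫ t in (0:ℝ)..T, ‖ω t‖ ^ 2) := by
  obtain ⟨ε, hε, hcoer⟩ := hP₂coer
  constructor
  · -- Part (i): Lax–Milgram
    set B : Z →L[ℝ] Z →L[ℝ] ℝ := (innerSL ℝ).comp P₂ with hB
    have hBco : IsCoercive B := by
      refine ⟨ε, hε, fun u => ?_⟩
      have := hcoer u
      have h1 : (B u) u = ⟪P₂ u, u⟫ := rfl
      rw [h1, real_inner_comm]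
      nlinarith [sq_nonneg ‖u‖]
    have hM : ∀ v, hBco.continuousLinearEquivOfBilin v = P₂ v := by
      intro v
      have h := fun w => hBco.continuousLinearEquivOfBilin_apply v w
      have h2 : ∀ w, ⟪hBco.continuousLinearEquivOfBilin v - P₂ v, w⟫ = 0 := by
        intro w
        rw [inner_sub_left, h w]; simp [hB]
      have := h2 (hBco.continuousLinearEquivOfBilin v - P₂ v)
      rwa [inner_self_eq_zero, sub_eq_zero] at this
    constructor
    · constructor
      · intro x y hxy
        have := hBco.continuousLinearEquivOfBilin.injective (a₁ := x) (a₂ := y)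
        rw [hM, hM] at this; exact this hxy
      · intro y
        obtain ⟨x, hx⟩ := hBco.continuousLinearEquivOfBilin.surjective y
        exact ⟨x, by rw [← hM]; exact hx⟩
    · refine ⟨hBco.continuousLinearEquivOfBilin.symm.toContinuousLinearMap, fun x => ?_,
        fun x => ?_⟩
      · simp only [ContinuousLinearEquiv.coe_coe, ← hM]
        exact hBco.continuousLinearEquivOfBilin.symm_apply_apply x
      · simp only [ContinuousLinearEquiv.coe_coe, ← hM]
        exact hBco.continuousLinearEquivOfBilin.apply_symm_apply x
  · -- Part (ii)
    intro ω hω e heX he0 hde ze hze hzec T hT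
    set V : ℝ → ℝ := fun t => ⟪P₂ (e t), e t⟫ with hV
    set g : ℝ → ℝ := fun t => γ₂ * ‖ω t‖ ^ 2 - γ₂⁻¹ * ‖ze t‖ ^ 2 with hg
    have hgc : Continuous g := by
      apply Continuous.sub
      · exact continuous_const.mul ((hω.norm).pow 2)
      · exact continuous_const.mul ((hzec.norm).pow 2)
    set φ : ℝ → ℝ := fun t => (∫ s in (0:ℝ)..t, g s) - V t with hφ
    have key : ∀ t, 0 ≤ t → ∃ v, HasDerivAt φ v t ∧ 0 ≤ v := by
      intro t ht
      have hm := heX t ht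
      set d : Z := A ⟨e t, hm⟩ + L (C₂ ⟨e t, hm⟩) - B₁ (ω t) - L (D₂ (ω t)) with hd
      have hde' : HasDerivAt e d t := hde t ht hm
      have hPde : HasDerivAt (fun s => P₂ (e s)) (P₂ d) t :=
        P₂.hasFDerivAt.comp_hasDerivAt t hde'
      have hVd : HasDerivAt V (⟪P₂ (e t), d⟫ + ⟪P₂ d, e t⟫) t :=
        HasDerivAt.inner ℝ hPde hde'
      have hId : HasDerivAt (fun u => ∫ s in (0:ℝ)..u, g s) (g t) t :=
        (hgc.integral_hasStrictDerivAt 0 t).hasDerivAt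
      refine ⟨g t - (⟪P₂ (e t), d⟫ + ⟪P₂ d, e t⟫), hId.sub hVd, ?_⟩
      -- now the dissipation inequality
      have hsym : ⟪P₂ (e t), d⟫ = ⟪P₂ d, e t⟫ := by
        rw [hP₂sa, real_inner_comm]
      have hP2d : P₂ d = (P₂ (A ⟨e t, hm⟩) + 𝒵 (C₂ ⟨e t, hm⟩))
          - (P₂ (B₁ (ω t)) + 𝒵 (D₂ (ω t))) := by
        rw [hd]; rw [map_sub, map_sub, map_add, hL, hL]; abel
      have hzet : ze t = C₃ ⟨e t, hm⟩ + D₃ (ω t) := hze t ht hm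
      have hdi := hdiss ⟨e t, hm⟩ (ω t) (γ₂⁻¹ • ze t)
      rw [← hzet] at hdi
      have hssq : ‖γ₂⁻¹ • ze t‖ ^ 2 = γ₂⁻¹ ^ 2 * ‖ze t‖ ^ 2 := by
        rw [norm_smul, mul_pow, Real.norm_eq_abs, abs_of_pos (by positivity)]
      have hsin : ⟪γ₂⁻¹ • ze t, ze t⟫ = γ₂⁻¹ * ‖ze t‖ ^ 2 := by
        rw [real_inner_smul_left, real_inner_self_eq_norm_sq]
      rw [hssq, hsin] at hdi
      have hinner : 2 * ⟪P₂ d, e t⟫ =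
          2 * ⟪P₂ (A ⟨e t, hm⟩) + 𝒵 (C₂ ⟨e t, hm⟩), (e t : Z)⟫
          - 2 * ⟪P₂ (B₁ (ω t)) + 𝒵 (D₂ (ω t)), (e t : Z)⟫ := by
        rw [hP2d, inner_sub_left]; ring
      have hnn : 0 ≤ ε₂ * ‖e t‖ ^ 2 := by positivity
      have hγne : γ₂ ≠ 0 := ne_of_gt hγ₂
      have hγinv : γ₂ * γ₂⁻¹ ^ 2 = γ₂⁻¹ := by field_simp
      rw [hsym, hg]
      simp only at hdi ⊢
      nlinarith [hdi, hinner, hnn]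
    have hmono : MonotoneOn φ (Set.Icc 0 T) := by
      apply monotoneOn_of_deriv_nonneg (convex_Icc 0 T)
      · intro t ht
        obtain ⟨v, hv, _⟩ := key t ht.1
        exact hv.continuousAt.continuousWithinAt
      · intro t ht
        rw [interior_Icc] at ht
        obtain ⟨v, hv, _⟩ := key t ht.1.le
        exact hv.differentiableAt.differentiableWithinAt
      · intro t ht
        rw [interior_Icc] at ht
        obtain ⟨v, hv, hv0⟩ := key t ht.1.le
        rw [hv.deriv]; exact hv0
    have hφ0 : φ 0 = 0 := by
      simp [hφ, hV, he0, intervalIntegral.integral_same]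
    have hVT : 0 ≤ V T := by
      have := hcoer (e T)
      have h2 : V T = ⟪e T, P₂ (e T)⟫ := real_inner_comm _ _
      nlinarith [sq_nonneg ‖e T‖]
    have hle : (0:ℝ) ≤ ∫ s in (0:ℝ)..T, g s := by
      have := hmono (Set.left_mem_Icc.2 hT) (Set.right_mem_Icc.2 hT) hT
      rw [hφ0] at this
      have : V T ≤ ∫ s in (0:ℝ)..T, g s := by
        simp only [hφ] at this; linarith
      linarith
    have hiω : IntervalIntegrable (fun t => ‖ω t‖ ^ 2) volume 0 T :=
      ((hω.norm).pow 2).intervalIntegrable 0 T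
    have hiz : IntervalIntegrable (fun t => ‖ze t‖ ^ 2) volume 0 T :=
      ((hzec.norm).pow 2).intervalIntegrable 0 T
    have hsplit : (∫ s in (0:ℝ)..T, g s) =
        γ₂ * (∫ t in (0:ℝ)..T, ‖ω t‖ ^ 2) - γ₂⁻¹ * ∫ t in (0:ℝ)..T, ‖ze t‖ ^ 2 := by
      rw [hg]
      rw [intervalIntegral.integral_sub (hiω.const_mul γ₂) (hiz.const_mul γ₂⁻¹),
        intervalIntegral.integral_const_mul, intervalIntegral.integral_const_mul]
    rw [hsplit] at hle
    have hγne : γ₂ ≠ 0 := ne_of_gt hγ₂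
    have h := mul_le_mul_of_nonneg_left (sub_nonneg.1 hle) (le_of_lt hγ₂)
    calc (∫ t in (0:ℝ)..T, ‖ze t‖ ^ 2)
        = γ₂ * (γ₂⁻¹ * ∫ t in (0:ℝ)..T, ‖ze t‖ ^ 2) := by field_simp
      _ ≤ γ₂ * (γ₂ * ∫ t in (0:ℝ)..T, ‖ω t‖ ^ 2) := h
      _ = γ₂ ^ 2 * ∫ t in (0:ℝ)..T, ‖ω t‖ ^ 2 := by ring
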